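/- If an error pattern E of rank r_E satisfies |U_E| ≤ (n − k_max + r_E − 1)/2, then E satisfies the partial-inverse condition, i.e., |U_E| ≤ n − k_max and the minimal-degree nonzero solution of the SPI problem deg(E⁽ⁱ⁾(x)Λ(x) mod m(x)) < k⁽ⁱ⁾ + |U_E| (for all i) is Λ_E(x) = Π_{ℓ∈U_E}(x − β_ℓ) up to a scalar. -/

import Mathlib

open Polynomial Matrix

section aux
variable {F : Type*} [Field F] {n : ℕ} {β : Fin n → F}

lemma aux_prod_dvd (hβ : Function.Injective β) (S : Finset (Fin n)) {P : F[X]}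
    (h : ∀ ℓ ∈ S, P.eval (β ℓ) = 0) : (∏ ℓ ∈ S, (X - C (β ℓ))) ∣ P := by
  refine Finset.prod_dvd_of_coprime ?_ fun ℓ hℓ => dvd_iff_isRoot.mpr (h ℓ hℓ)
  intro a _ b _ hab
  exact isCoprime_X_sub_C_of_isUnit_sub (sub_ne_zero.mpr fun hh => hab (hβ hh)).isUnit

lemma aux_monic (S : Finset (Fin n)) : (∏ ℓ ∈ S, (X - C (β ℓ))).Monic :=
  monic_prod_of_monic _ _ fun ℓ _ => monic_X_sub_C _

lemma aux_degree (S : Finset (Fin n)) :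
    (∏ ℓ ∈ S, (X - C (β ℓ))).degree = (S.card : WithBot ℕ) := by
  rw [degree_prod]
  simp [degree_X_sub_C]

end aux

/-- If `|U_E| ≤ (n − k_max + rank E − 1)/2` (i.e. `2|U_E| + 1 ≤ n − k_max + rank E`),
then `E` satisfies the partial-inverse condition: `|U_E| ≤ n − k_max`, the error
locator `Λ_E = ∏_{ℓ∈U_E}(x − β_ℓ)` satisfies and is minimal for the SPI problem
`deg(E⁽ⁱ⁾ Λ mod m) < k⁽ⁱ⁾ + |U_E|` (all `i`), and every minimal-degree nonzero
solution is a nonzero scalar multiple of `Λ_E`. -/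
theorem partialInverse_condition_of_rank_bound {F : Type*} [Field F] {L n : ℕ}
    (β : Fin n → F) (hβ : Function.Injective β)
    (E : Matrix (Fin L) (Fin n) F)
    (Epoly : Fin L → F[X])
    (hEdeg : ∀ i, (Epoly i).degree < (n : WithBot ℕ))
    (hEval : ∀ i ℓ, (Epoly i).eval (β ℓ) = E i ℓ)
    (U : Finset (Fin n))
    (hU : ∀ ℓ, ℓ ∈ U ↔ ∃ i, E i ℓ ≠ 0)
    (k : Fin L → ℕ) (hkn : ∀ i, k i < n)
    (hrank : 2 * U.card + 1 ≤ n - Finset.univ.sup k + E.rank) :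
    U.card ≤ n - Finset.univ.sup k ∧
    (∀ i, ((Epoly i) * (∏ ℓ ∈ U, (X - C (β ℓ))) % (∏ ℓ, (X - C (β ℓ)))).degree <
      ((k i + U.card : ℕ) : WithBot ℕ)) ∧
    (∀ Λ : F[X], Λ ≠ 0 →
      (∀ i, ((Epoly i) * Λ % (∏ ℓ, (X - C (β ℓ)))).degree <
        ((k i + U.card : ℕ) : WithBot ℕ)) →
      (∏ ℓ ∈ U, (X - C (β ℓ))).degree ≤ Λ.degree) ∧
    (∀ Λ : F[X], Λ ≠ 0 →
      (∀ i, ((Epoly i) * Λ % (∏ ℓ, (X - C (β ℓ)))).degree <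
        ((k i + U.card : ℕ) : WithBot ℕ)) →
      (∀ g : F[X], g ≠ 0 →
        (∀ i, ((Epoly i) * g % (∏ ℓ, (X - C (β ℓ)))).degree <
          ((k i + U.card : ℕ) : WithBot ℕ)) → Λ.degree ≤ g.degree) →
      ∃ cst : F, cst ≠ 0 ∧ Λ = cst • (∏ ℓ ∈ U, (X - C (β ℓ)))) := by
  classical
  set m : F[X] := ∏ ℓ, (X - C (β ℓ)) with hm_def
  set ΛE : F[X] := ∏ ℓ ∈ U, (X - C (β ℓ)) with hΛE_def
  have hm_monic : m.Monic := aux_monic _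
  have hΛE_monic : ΛE.Monic := aux_monic _
  have hmdeg : m.degree = (n : WithBot ℕ) := by
    simpa using aux_degree (β := β) Finset.univ
  have hΛEdeg : ΛE.degree = (U.card : WithBot ℕ) := aux_degree U
  set kmax := Finset.univ.sup k with hkmax_def
  have hkmax_le : kmax ≤ n := Finset.sup_le fun i _ => (hkn i).le
  have hu_le_n : U.card ≤ n := le_trans (Finset.card_le_univ U) (by simp)
  have hmod_eq : ∀ p : F[X], p % m = p %ₘ m := fun p => (modByMonic_eq_mod p hm_monic).symm
  -- rank ≤ |U|
  have hr_le_u : E.rank ≤ U.card := by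
    rw [Matrix.rank_eq_finrank_span_cols]
    have hsub : Submodule.span F (Set.range (Eᵀ)) =
        Submodule.span F ((Eᵀ) '' (↑U : Set (Fin n))) := by
      refine le_antisymm (Submodule.span_le.mpr ?_)
        (Submodule.span_mono (Set.image_subset_range _ _))
      rintro _ ⟨ℓ, rfl⟩
      by_cases hℓ : ℓ ∈ U
      · exact Submodule.subset_span ⟨ℓ, hℓ, rfl⟩
      · have h0 : Eᵀ ℓ = 0 := by
          funext i
          simp only [Matrix.transpose_apply, Pi.zero_apply]
          by_contra hne
          exact hℓ ((hU ℓ).mpr ⟨i, hne⟩)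
        rw [h0]
        exact (Submodule.span F _).zero_mem
    rw [show E.col = Eᵀ from rfl, hsub]
    haveI : Fintype ↑(Eᵀ '' ↑U) := Set.fintypeImage (↑U) (Eᵀ : Fin n → Fin L → F)
    refine le_trans (finrank_span_le_card _) ?_
    erw [Set.toFinset_image]
    exact le_trans Finset.card_image_le (by simp)
  -- evaluation of m
  have hm_root : ∀ (ℓ : Fin n) (P : F[X]), m ∣ P → P.eval (β ℓ) = 0 := by
    intro ℓ P hP
    have h1 : (X - C (β ℓ)) ∣ m :=
      hm_def ▸ Finset.dvd_prod_of_mem (fun ℓ => X - C (β ℓ)) (Finset.mem_univ ℓ)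
    exact dvd_iff_isRoot.mp (h1.trans hP)
  -- conjunct 2
  have hc2 : ∀ i, ((Epoly i) * ΛE % m).degree < ((k i + U.card : ℕ) : WithBot ℕ) := by
    intro i
    have hdvd : m ∣ Epoly i * ΛE := by
      rw [hm_def]
      apply aux_prod_dvd hβ
      intro ℓ _
      rw [eval_mul]
      by_cases hℓ : ℓ ∈ U
      · have hz : ΛE.eval (β ℓ) = 0 := by
          rw [hΛE_def, eval_prod]
          exact Finset.prod_eq_zero hℓ (by simp)
        rw [hz, mul_zero]
      · have hz : (Epoly i).eval (β ℓ) = 0 := by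
          rw [hEval]
          by_contra hne
          exact hℓ ((hU ℓ).mpr ⟨i, hne⟩)
        rw [hz, zero_mul]
    rw [hmod_eq, (modByMonic_eq_zero_iff_dvd hm_monic).mpr hdvd, degree_zero]
    exact WithBot.bot_lt_coe _
  -- key claim
  have key : ∀ Λ : F[X], Λ ≠ 0 →
      (∀ i, ((Epoly i) * Λ % m).degree < ((k i + U.card : ℕ) : WithBot ℕ)) →
      ∀ ℓ ∈ U, Λ.eval (β ℓ) = 0 := by
    intro Λ hΛ hsol
    simp only [hmod_eq] at hsol
    set Z : Finset (Fin n) := U.filter (fun ℓ => Λ.eval (β ℓ) = 0) with hZ_def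
    set t := Z.card with ht_def
    set h : Fin L → F[X] := fun i => (Epoly i * Λ) %ₘ m with hh_def
    have hsol' : ∀ i, (h i).degree < ((k i + U.card : ℕ) : WithBot ℕ) := hsol
    have heval_h : ∀ i ℓ, (h i).eval (β ℓ) = E i ℓ * Λ.eval (β ℓ) := by
      intro i ℓ
      have hdecomp := modByMonic_add_div (Epoly i * Λ) m
      have h2 := congrArg (Polynomial.eval (β ℓ)) hdecomp
      simp only [eval_add, eval_mul] at h2
      rw [hm_root ℓ m dvd_rfl, zero_mul, add_zero, hEval] at h2
      exact h2
    have hZmem : ∀ ℓ, ℓ ∈ Z ↔ ℓ ∈ U ∧ Λ.eval (β ℓ) = 0 := by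
      intro ℓ; rw [hZ_def]; simp
    set G : Finset (Fin n) := Uᶜ ∪ Z with hG_def
    set g : F[X] := ∏ ℓ ∈ G, (X - C (β ℓ)) with hg_def
    have hg_monic : g.Monic := aux_monic _
    have hdisj : Disjoint Uᶜ Z := by
      rw [Finset.disjoint_left]
      intro a ha haz
      exact (Finset.mem_compl.mp ha) ((hZmem a).mp haz).1
    have hGcard : G.card = (n - U.card) + t := by
      rw [hG_def, Finset.card_union_of_disjoint hdisj, Finset.card_compl]
      simp [ht_def]
    have hgdeg : g.degree = ((n - U.card + t : ℕ) : WithBot ℕ) := by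
      rw [hg_def, aux_degree, hGcard]
    have hgdvd : ∀ i, g ∣ h i := by
      intro i
      rw [hg_def]
      apply aux_prod_dvd hβ
      intro ℓ hℓ
      rw [heval_h]
      rcases Finset.mem_union.mp hℓ with hc | hz
      · have : E i ℓ = 0 := by
          by_contra hne
          exact (Finset.mem_compl.mp hc) ((hU ℓ).mpr ⟨i, hne⟩)
        rw [this, zero_mul]
      · rw [((hZmem ℓ).mp hz).2, mul_zero]
    have hki : ∀ i, k i ≤ kmax := fun i => Finset.le_sup (Finset.mem_univ i)
    rcases le_or_gt E.rank t with ht | ht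
    · -- many zeros: every h i vanishes
      have hh0 : ∀ i, h i = 0 := by
        intro i
        refine eq_zero_of_dvd_of_degree_lt (hgdvd i) ?_
        refine lt_of_lt_of_le (hsol' i) ?_
        rw [hgdeg]
        have hnat : (k i + U.card) ≤ (n - U.card + t) := by have := hki i; omega
        exact_mod_cast hnat
      intro ℓ hℓU
      obtain ⟨i, hi⟩ := (hU ℓ).mp hℓU
      have hdvd : m ∣ Epoly i * Λ := (modByMonic_eq_zero_iff_dvd hm_monic).mp (hh0 i)
      have hev := hm_root ℓ _ hdvd
      rw [eval_mul, hEval] at hev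
      exact (mul_eq_zero.mp hev).resolve_left hi
    · exfalso
      set d := E.rank - 1 - t with hd_def
      set Q : Submodule F F[X] :=
        Submodule.map (LinearMap.mulLeft F g) (Polynomial.degreeLT F d) with hQ_def
      have hQmem : ∀ i, h i ∈ Q := by
        intro i
        rcases eq_or_ne (h i) 0 with h0 | h0
        · rw [h0]; exact Q.zero_mem
        · have hmod0 : (h i) %ₘ g = 0 := (modByMonic_eq_zero_iff_dvd hg_monic).mpr (hgdvd i)
          have hfac : h i = g * (h i /ₘ g) := by
            conv_lhs => rw [← modByMonic_add_div (h i) g]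
            rw [hmod0, zero_add]
          have hq0 : h i /ₘ g ≠ 0 := by
            intro hq; rw [hq, mul_zero] at hfac; exact h0 hfac
          have hdegq : (h i /ₘ g).degree < (d : WithBot ℕ) := by
            have hdm : (h i).degree = g.degree + (h i /ₘ g).degree := by
              conv_lhs => rw [hfac]
              exact degree_mul
            have h1 := hsol' i
            rw [hdm, hgdeg, degree_eq_natDegree hq0, ← Nat.cast_add] at h1
            have h2 : (n - U.card + t) + (h i /ₘ g).natDegree < k i + U.card := by
              exact_mod_cast h1
            rw [degree_eq_natDegree hq0]
            have h3 : (h i /ₘ g).natDegree < d := by have := hki i; omega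
            exact_mod_cast h3
          exact ⟨h i /ₘ g, mem_degreeLT.mpr hdegq,
            by rw [LinearMap.mulLeft_apply]; exact hfac.symm⟩
      set ψ : (Fin L → F) →ₗ[F] F[X] :=
        ∑ i, LinearMap.smulRight (LinearMap.proj i) (Epoly i) with hψ_def
      have hψ_apply : ∀ c, ψ c = ∑ i, c i • Epoly i := by
        intro c
        rw [hψ_def]
        simp [LinearMap.sum_apply]
      have hψ_single : ∀ i, ψ (Pi.single i 1) = Epoly i := by
        intro i
        rw [hψ_apply]
        simp [Pi.single_apply]
      set A : (Fin L → F) →ₗ[F] F[X] :=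
        (Polynomial.modByMonicHom m) ∘ₗ (LinearMap.mulRight F Λ) ∘ₗ ψ with hA_def
      have hA_apply : ∀ c, A c = (ψ c * Λ) %ₘ m := by
        intro c
        rw [hA_def]
        simp [Polynomial.modByMonicHom, LinearMap.mulRight_apply]
      have hA_single : ∀ i, A (Pi.single i 1) = h i := by
        intro i
        rw [hA_apply, hψ_single, hh_def]
      have hA_mem : ∀ c, A c ∈ Q := by
        intro c
        have hc : c = ∑ i, c i • (Pi.single i 1 : Fin L → F) := by
          funext j
          simp [Pi.single_apply]
        rw [hc, map_sum]
        refine Submodule.sum_mem _ fun i _ => ?_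
        rw [LinearMap.map_smul, hA_single]
        exact Q.smul_mem _ (hQmem i)
      set M : (Fin L → F) →ₗ[F] (Fin n → F) := Matrix.mulVecLin Eᵀ with hM_def
      have hM_apply : ∀ c ℓ, M c ℓ = ∑ i, E i ℓ * c i := by
        intro c ℓ
        rw [hM_def]
        simp [Matrix.mulVecLin_apply, Matrix.mulVec, dotProduct, Matrix.vecMul, mul_comm]
      have hψeval : ∀ c ℓ, (ψ c).eval (β ℓ) = M c ℓ := by
        intro c ℓ
        rw [hψ_apply, hM_apply, eval_finset_sum]
        refine Finset.sum_congr rfl fun i _ => ?_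
        rw [eval_smul, smul_eq_mul, hEval, mul_comm]
      set ρ : (Fin n → F) →ₗ[F] ((↥Z) → F) :=
        LinearMap.funLeft F F (fun z : ↥Z => (z : Fin n)) with hρ_def
      set B := LinearMap.prod (A.codRestrict Q hA_mem) (ρ ∘ₗ M) with hB_def
      have hkerB : LinearMap.ker B ≤ LinearMap.ker M := by
        intro c hc
        rw [hB_def, LinearMap.ker_prod, Submodule.mem_inf, LinearMap.ker_codRestrict] at hc
        obtain ⟨hA0, hρ0⟩ := hc
        rw [LinearMap.mem_ker] at hA0 hρ0 ⊢
        have hdvd : m ∣ ψ c * Λ := by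
          rw [hA_apply] at hA0
          exact (modByMonic_eq_zero_iff_dvd hm_monic).mp hA0
        have hev : ∀ ℓ, M c ℓ * Λ.eval (β ℓ) = 0 := by
          intro ℓ
          have hh := hm_root ℓ _ hdvd
          rw [eval_mul, hψeval] at hh
          exact hh
        funext ℓ
        show M c ℓ = 0
        by_cases hℓZ : ℓ ∈ Z
        · have hz := congrFun hρ0 ⟨ℓ, hℓZ⟩
          simpa [hρ_def, LinearMap.funLeft_apply] using hz
        · by_cases hℓU : ℓ ∈ U
          · have hΛne : Λ.eval (β ℓ) ≠ 0 := fun hz => hℓZ ((hZmem ℓ).mpr ⟨hℓU, hz⟩)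
            exact (mul_eq_zero.mp (hev ℓ)).resolve_right hΛne
          · rw [hM_apply]
            refine Finset.sum_eq_zero fun i _ => ?_
            have hE0 : E i ℓ = 0 := by
              by_contra hne; exact hℓU ((hU ℓ).mpr ⟨i, hne⟩)
            rw [hE0, zero_mul]
      haveI : Module.Finite F (Polynomial.degreeLT F d) :=
        Module.Finite.equiv (Polynomial.degreeLTEquiv F d).symm
      haveI : Module.Finite F ↥Q := Module.Finite.map _ _
      have f1 := LinearMap.finrank_range_add_finrank_ker B
      have f2 := LinearMap.finrank_range_add_finrank_ker M
      rw [Module.finrank_pi, Fintype.card_fin] at f1 f2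
      have f3 : Module.finrank F (LinearMap.range M) = E.rank := by
        rw [hM_def, ← Matrix.rank_transpose E]
        rfl
      have f4 : Module.finrank F (LinearMap.ker B) ≤ Module.finrank F (LinearMap.ker M) :=
        Submodule.finrank_mono hkerB
      have f5 : Module.finrank F (LinearMap.range B) ≤ Module.finrank F (↥Q × ((↥Z) → F)) :=
        (LinearMap.range B).finrank_le
      have f6 : Module.finrank F (↥Q × ((↥Z) → F)) = Module.finrank F ↥Q + t := by
        rw [Module.finrank_prod, Module.finrank_pi, Fintype.card_coe]
      have f7 : Module.finrank F ↥Q ≤ d := by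
        refine le_trans (Submodule.finrank_map_le _ _) ?_
        rw [(Polynomial.degreeLTEquiv F d).finrank_eq, Module.finrank_pi, Fintype.card_fin]
      rw [f3] at f2
      omega
  have hΛE_dvd : ∀ Λ : F[X], Λ ≠ 0 →
      (∀ i, ((Epoly i) * Λ % m).degree < ((k i + U.card : ℕ) : WithBot ℕ)) → ΛE ∣ Λ := by
    intro Λ hΛ hsol
    rw [hΛE_def]
    exact aux_prod_dvd hβ U (key Λ hΛ hsol)
  refine ⟨by omega, hc2, ?_, ?_⟩
  · intro Λ hΛ hsol
    exact degree_le_of_dvd (hΛE_dvd Λ hΛ hsol) hΛ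
  · intro Λ hΛ hsol hmin
    obtain ⟨q, hq⟩ := hΛE_dvd Λ hΛ hsol
    have hq0 : q ≠ 0 := by
      rintro rfl
      rw [mul_zero] at hq
      exact hΛ hq
    have hle : Λ.degree ≤ ΛE.degree := hmin ΛE hΛE_monic.ne_zero hc2
    have hq_deg : q.natDegree = 0 := by
      have h1 : Λ.degree = ΛE.degree + q.degree := by rw [hq, degree_mul]
      rw [h1, hΛEdeg, degree_eq_natDegree hq0, ← Nat.cast_add] at hle
      have h2 : U.card + q.natDegree ≤ U.card := by exact_mod_cast hle
      omega
    have hqC : q = C (q.coeff 0) := Polynomial.eq_C_of_natDegree_le_zero hq_deg.le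
    rw [hqC] at hq
    refine ⟨q.coeff 0, ?_, ?_⟩
    · intro h0
      rw [h0, map_zero] at hqC
      exact hq0 hqC
    · rw [hq, smul_eq_C_mul, mul_comm]
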